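/- arXiv:2407.21653 — 4 statements merged into one kernel-verified Lean document; each statement's English description precedes it below -/
import Mathlib

section
/- For any permutation w of {1,...,n}, the number of inversions inv(w) satisfies (1/2)·dis(w) ≤ inv(w) ≤ dis(w), where dis(w) = Σ_{i=1}^n |i - w(i)| is the total displacement. -/
open Finset Equiv

namespace DG

variable {n : ℕ}

def invC (w : Equiv.Perm (Fin n)) : ℕ :=
  (Finset.univ.filter fun p : Fin n × Fin n => p.1 < p.2 ∧ w p.2 < w p.1).card

def dis (w : Equiv.Perm (Fin n)) : ℕ :=
  ∑ i : Fin n, (((i : ℕ) : ℤ) - ((w i : ℕ) : ℤ)).natAbs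

lemma card_filter_lt (c : Fin n) :
    (Finset.univ.filter fun v : Fin n => v < c).card = (c : ℕ) := by
  have h : (Finset.univ.filter fun v : Fin n => v < c) = Finset.Iio c := by
    ext v; simp
  rw [h, Fin.card_Iio]

lemma card_apply_lt (w : Equiv.Perm (Fin n)) (c : Fin n) :
    (Finset.univ.filter fun j => w j < c).card = (c : ℕ) := by
  rw [← card_filter_lt c]
  apply Finset.card_bij (fun j _ => w j)
  · intro a ha; simp only [mem_filter, mem_univ, true_and] at ha ⊢; exact ha
  · intro a _ b _ h; exact w.injective h
  · intro b hb
    refine ⟨w.symm b, ?_, by simp⟩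
    simp only [mem_filter, mem_univ, true_and] at hb ⊢
    simpa using hb

lemma invC_eq_sum_left (w : Equiv.Perm (Fin n)) :
    invC w = ∑ i : Fin n, (Finset.univ.filter fun j => i < j ∧ w j < w i).card := by
  rw [invC, Finset.card_eq_sum_card_fiberwise (f := fun p : Fin n × Fin n => p.1)
    (t := Finset.univ) (fun p _ => Finset.mem_univ _)]
  refine Finset.sum_congr rfl fun i _ => ?_
  apply Finset.card_bij (fun p _ => p.2)
  · intro p hp
    simp only [mem_filter, mem_univ, true_and] at hp ⊢
    obtain ⟨⟨h1, h2⟩, h3⟩ := hp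
    rw [h3] at h1 h2; exact ⟨h1, h2⟩
  · intro p hp q hq h
    simp only [mem_filter] at hp hq
    exact Prod.ext (hp.2.trans hq.2.symm) h
  · intro j hj
    simp only [mem_filter, mem_univ, true_and] at hj
    exact ⟨(i, j), by simp [hj.1, hj.2], rfl⟩

lemma invC_eq_sum_right (w : Equiv.Perm (Fin n)) :
    invC w = ∑ i : Fin n, (Finset.univ.filter fun j => j < i ∧ w i < w j).card := by
  rw [invC, Finset.card_eq_sum_card_fiberwise (f := fun p : Fin n × Fin n => p.2)
    (t := Finset.univ) (fun p _ => Finset.mem_univ _)]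
  refine Finset.sum_congr rfl fun i _ => ?_
  apply Finset.card_bij (fun p _ => p.1)
  · intro p hp
    simp only [mem_filter, mem_univ, true_and] at hp ⊢
    obtain ⟨⟨h1, h2⟩, h3⟩ := hp
    rw [h3] at h1 h2; exact ⟨h1, h2⟩
  · intro p hp q hq h
    simp only [mem_filter] at hp hq
    exact Prod.ext h (hp.2.trans hq.2.symm)
  · intro j hj
    simp only [mem_filter, mem_univ, true_and] at hj
    exact ⟨(j, i), by simp [hj.1, hj.2], rfl⟩

lemma left_ge (w : Equiv.Perm (Fin n)) (i : Fin n) :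
    ((w i : ℕ)) ≤ (i : ℕ) + (Finset.univ.filter fun j => i < j ∧ w j < w i).card := by
  rw [← card_apply_lt w (w i), ← card_filter_lt i]
  calc (Finset.univ.filter fun j => w j < w i).card
      ≤ ((Finset.univ.filter fun v : Fin n => v < i) ∪
          (Finset.univ.filter fun j => i < j ∧ w j < w i)).card := by
        apply Finset.card_le_card
        intro j hj
        simp only [mem_filter, mem_univ, true_and] at hj
        rcases lt_trichotomy j i with h | h | h
        · exact Finset.mem_union_left _ (by simp [h])
        · exact absurd (h ▸ hj) (lt_irrefl _)
        · exact Finset.mem_union_right _ (by simp [h, hj])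
    _ ≤ _ := Finset.card_union_le _ _

lemma right_ge (w : Equiv.Perm (Fin n)) (i : Fin n) :
    ((i : ℕ)) ≤ (w i : ℕ) + (Finset.univ.filter fun j => j < i ∧ w i < w j).card := by
  rw [← card_apply_lt w (w i), ← card_filter_lt i]
  calc (Finset.univ.filter fun v : Fin n => v < i).card
      ≤ ((Finset.univ.filter fun j => w j < w i) ∪
          (Finset.univ.filter fun j => j < i ∧ w i < w j)).card := by
        apply Finset.card_le_card
        intro j hj
        simp only [mem_filter, mem_univ, true_and] at hj
        rcases lt_trichotomy (w j) (w i) with h | h | h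
        · exact Finset.mem_union_left _ (by simp [h])
        · exact absurd (w.injective h ▸ hj) (lt_irrefl _)
        · exact Finset.mem_union_right _ (by simp [hj, h])
    _ ≤ _ := Finset.card_union_le _ _

lemma dis_le_two_mul (w : Equiv.Perm (Fin n)) : dis w ≤ 2 * invC w := by
  have hsum : dis w ≤
      (∑ i : Fin n, (Finset.univ.filter fun j => i < j ∧ w j < w i).card) +
      (∑ i : Fin n, (Finset.univ.filter fun j => j < i ∧ w i < w j).card) := by
    rw [dis, ← Finset.sum_add_distrib]
    apply Finset.sum_le_sum
    intro i _
    have h1 := left_ge w i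
    have h2 := right_ge w i
    omega
  rw [← invC_eq_sum_left, ← invC_eq_sum_right] at hsum
  omega

lemma key (w : Equiv.Perm (Fin n))
    (hne : (Finset.univ.filter fun p : Fin n => w p ≠ p).Nonempty) :
    ∃ w' : Equiv.Perm (Fin n),
      (Finset.univ.filter fun p : Fin n => w' p ≠ p).card <
        (Finset.univ.filter fun p : Fin n => w p ≠ p).card ∧
      invC w + dis w' < invC w' + dis w := by
  classical
  set F := Finset.univ.filter fun p : Fin n => w p ≠ p with hF
  set i := F.min' hne with hidef
  have hiF : i ∈ F := F.min'_mem hne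
  have hi : w i ≠ i := (Finset.mem_filter.mp hiF).2
  have hmin : ∀ p, w p ≠ p → i ≤ p := fun p hp =>
    F.min'_le p (Finset.mem_filter.mpr ⟨Finset.mem_univ _, hp⟩)
  have h2 : ∀ p, p < i → w p = p := by
    intro p hp
    by_contra hc
    exact absurd (hmin p hc) (not_le.mpr hp)
  have h3 : i < w i := by
    rcases lt_trichotomy i (w i) with h | h | h
    · exact h
    · exact absurd h.symm hi
    · exact absurd (w.injective (h2 _ h)) hi
  set j := w.symm i with hjdef
  have h4 : w j = i := w.apply_symm_apply i
  have h5 : j ≠ i := fun h => hi (h ▸ h4)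
  have h6 : i < j := by
    rcases lt_trichotomy i j with h | h | h
    · exact h
    · exact absurd h.symm h5
    · exact absurd ((h2 _ h).symm.trans h4) h5
  have h7 : ∀ q, i < q → q ≠ j → i < w q := by
    intro q hq hqj
    rcases lt_trichotomy i (w q) with h | h | h
    · exact h
    · exact absurd (by rw [hjdef, h, Equiv.symm_apply_apply]) hqj
    · have hfix : w q = q := w.injective (h2 _ h)
      exact absurd (hfix ▸ h) (not_lt.mpr hq.le)
  set a := w i with hadef
  set M := Finset.univ.filter (fun q : Fin n => i < q ∧ q < j ∧ w q < a) with hM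
  -- bound m by positions
  have hmj : M.card + (i : ℕ) + 1 ≤ (j : ℕ) := by
    have hle : M.card ≤ (Finset.Ioo (i : ℕ) (j : ℕ)).card := by
      refine Finset.card_le_card_of_injOn (fun q => (q : ℕ)) ?_ ?_
      · intro q hq
        simp only [hM, Finset.mem_coe, mem_filter, mem_univ, true_and] at hq
        simp only [Finset.mem_coe, Finset.mem_Ioo]
        exact ⟨hq.1, hq.2.1⟩
      · intro q _ r _ h
        exact Fin.val_injective h
    rw [Nat.card_Ioo] at hle
    have : (i : ℕ) < (j : ℕ) := h6
    omega
  have hma : M.card + (i : ℕ) + 1 ≤ (a : ℕ) := by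
    have hle : M.card ≤ (Finset.Ioo (i : ℕ) (a : ℕ)).card := by
      refine Finset.card_le_card_of_injOn (fun q => ((w q : Fin n) : ℕ)) ?_ ?_
      · intro q hq
        simp only [hM, Finset.mem_coe, mem_filter, mem_univ, true_and] at hq
        simp only [Finset.mem_coe, Finset.mem_Ioo]
        exact ⟨h7 q hq.1 (ne_of_lt hq.2.1), hq.2.2⟩
      · intro q _ r _ h
        exact w.injective (Fin.val_injective h)
    rw [Nat.card_Ioo] at hle
    have : (i : ℕ) < (a : ℕ) := h3
    omega
  set w' := w * Equiv.swap i j with hw'def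
  have hw'i : w' i = i := by
    rw [hw'def, Equiv.Perm.mul_apply, Equiv.swap_apply_left, h4]
  have hw'j : w' j = a := by
    rw [hw'def, Equiv.Perm.mul_apply, Equiv.swap_apply_right, hadef]
  have hw'o : ∀ p, p ≠ i → p ≠ j → w' p = w p := by
    intro p hpi hpj
    rw [hw'def, Equiv.Perm.mul_apply, Equiv.swap_apply_of_ne_of_ne hpi hpj]
  refine ⟨w', ?_, ?_⟩
  · -- card decreases
    apply Finset.card_lt_card
    rw [Finset.ssubset_iff_of_subset]
    · exact ⟨i, hiF, by simp [hw'i]⟩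
    · intro p hp
      simp only [hF, mem_filter, mem_univ, true_and] at hp ⊢
      by_cases hpi : p = i
      · exact absurd (hpi ▸ hw'i) (hpi ▸ hp)
      by_cases hpj : p = j
      · rw [hpj, h4]; exact fun h => h5 h.symm
      · rw [← hw'o p hpi hpj]; exact hp
  · -- main inequality
    have hdis : dis w' + (2 * M.card + 2) ≤ dis w := by
      have hsplit : ∀ x : Equiv.Perm (Fin n), dis x =
          (∑ p ∈ (Finset.univ.erase j).erase i,
            (((p : ℕ) : ℤ) - ((x p : ℕ) : ℤ)).natAbs) +
          ((((i : ℕ) : ℤ) - ((x i : ℕ) : ℤ)).natAbs +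
           (((j : ℕ) : ℤ) - ((x j : ℕ) : ℤ)).natAbs) := by
        intro x
        rw [dis, ← Finset.sum_erase_add Finset.univ _ (Finset.mem_univ j),
          ← Finset.sum_erase_add (Finset.univ.erase j) _
            (Finset.mem_erase.mpr ⟨Ne.symm (ne_of_gt h6), Finset.mem_univ i⟩)]
        omega
      have hsame : (∑ p ∈ (Finset.univ.erase j).erase i,
            (((p : ℕ) : ℤ) - ((w' p : ℕ) : ℤ)).natAbs) =
          (∑ p ∈ (Finset.univ.erase j).erase i,
            (((p : ℕ) : ℤ) - ((w p : ℕ) : ℤ)).natAbs) := by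
        apply Finset.sum_congr rfl
        intro p hp
        simp only [Finset.mem_erase] at hp
        rw [hw'o p hp.1 hp.2.1]
      rw [hsplit w, hsplit w', hsame, hw'i, hw'j, h4]
      have hia : (i : ℕ) < (a : ℕ) := h3
      have hij : (i : ℕ) < (j : ℕ) := h6
      omega
    have hinv : invC w ≤ invC w' + (2 * M.card + 1) := by
      classical
      set S := Finset.univ.filter fun p : Fin n × Fin n => p.1 < p.2 ∧ w p.2 < w p.1 with hS
      set S' := Finset.univ.filter fun p : Fin n × Fin n => p.1 < p.2 ∧ w' p.2 < w' p.1 with hS'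
      set Bad : Finset (Fin n × Fin n) :=
        insert ((i, j) : Fin n × Fin n)
          ((M.image fun q => (i, q)) ∪ (M.image fun q => (q, j))) with hBad
      have hBadcard : Bad.card ≤ 2 * M.card + 1 := by
        calc Bad.card ≤ ((M.image fun q => (i, q)) ∪ (M.image fun q => (q, j))).card + 1 :=
          Finset.card_insert_le _ _
        _ ≤ (M.image fun q => (i, q)).card + (M.image fun q => (q, j)).card + 1 := by
            have := Finset.card_union_le (M.image fun q => (i, q)) (M.image fun q => (q, j))
            omega
        _ ≤ 2 * M.card + 1 := by
            have h1 := Finset.card_image_le (s := M) (f := fun q => ((i, q) : Fin n × Fin n))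
            have h2 := Finset.card_image_le (s := M) (f := fun q => ((q, j) : Fin n × Fin n))
            omega
      have hstep : (S \ Bad).card ≤ S'.card := by
        apply Finset.card_le_card_of_injOn
          (fun p => if p.1 = i ∧ j < p.2 then (j, p.2) else p)
        · -- maps to
          intro p hp
          obtain ⟨hpS, hpB⟩ := Finset.mem_sdiff.mp hp
          obtain ⟨hlt, hwlt⟩ := (Finset.mem_filter.mp hpS).2
          by_cases hc : p.1 = i ∧ j < p.2
          · simp only [Finset.mem_coe, if_pos hc]
            simp only [hS', Finset.mem_filter, Finset.mem_univ, true_and]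
            refine ⟨hc.2, ?_⟩
            have hp2i : p.2 ≠ i := ne_of_gt (h6.trans hc.2)
            have hp2j : p.2 ≠ j := ne_of_gt hc.2
            rw [hw'o p.2 hp2i hp2j, hw'j]
            rw [hc.1] at hwlt
            exact hwlt
          · simp only [Finset.mem_coe, if_neg hc]
            simp only [hS', Finset.mem_filter, Finset.mem_univ, true_and]
            refine ⟨hlt, ?_⟩
            by_cases h1i : p.1 = i
            · -- p.2 ≤ j; impossible without being in Bad
              exfalso
              have hnlt : ¬ j < p.2 := fun hh => hc ⟨h1i, hh⟩
              by_cases h2j : p.2 = j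
              · exact hpB (by
                  rw [show p = ((i, j) : Fin n × Fin n) from Prod.ext h1i h2j, hBad]
                  exact Finset.mem_insert_self _ _)
              · have hp2M : p.2 ∈ M := by
                  simp only [hM, Finset.mem_filter, Finset.mem_univ, true_and]
                  refine ⟨h1i ▸ hlt, lt_of_le_of_ne (not_lt.mp hnlt) h2j, ?_⟩
                  show w p.2 < w i
                  rw [← h1i]; exact hwlt
                apply hpB
                rw [hBad]
                apply Finset.mem_insert_of_mem
                apply Finset.mem_union_left
                exact Finset.mem_image.mpr ⟨p.2, hp2M, Prod.ext h1i.symm rfl⟩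
            by_cases h1j : p.1 = j
            · exfalso
              have hgt : i < w p.2 := h7 p.2 (h6.trans (h1j ▸ hlt)) (ne_of_gt (h1j ▸ hlt))
              rw [h1j, h4] at hwlt
              exact absurd (hwlt.trans hgt) (lt_irrefl _)
            by_cases h2i : p.2 = i
            · exfalso
              have hp1 : p.1 < i := h2i ▸ hlt
              rw [h2i, h2 p.1 hp1] at hwlt
              exact absurd (h3.trans hwlt) (not_lt.mpr hp1.le)
            by_cases h2j : p.2 = j
            · rcases lt_trichotomy p.1 i with h | h | h
              · exfalso
                rw [h2j, h4, h2 p.1 h] at hwlt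
                exact absurd (hwlt.trans h) (lt_irrefl _)
              · exact absurd h h1i
              · have hp1M : p.1 ∉ M := by
                  intro hmem
                  apply hpB
                  rw [hBad]
                  apply Finset.mem_insert_of_mem
                  apply Finset.mem_union_right
                  exact Finset.mem_image.mpr ⟨p.1, hmem, Prod.ext rfl h2j.symm⟩
                have hwa : a < w p.1 := by
                  have : ¬ w p.1 < a := by
                    intro hc2
                    exact hp1M (by
                      simp only [hM, Finset.mem_filter, Finset.mem_univ, true_and]
                      exact ⟨h, h2j ▸ hlt, hc2⟩)
                  have hne2 : w p.1 ≠ a := fun hc2 => h1i (w.injective (hadef ▸ hc2))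
                  exact lt_of_le_of_ne (not_lt.mp this) (Ne.symm hne2)
                rw [h2j, hw'j, hw'o p.1 h1i h1j]
                exact hwa
            · rw [hw'o p.1 h1i h1j, hw'o p.2 h2i h2j]
              exact hwlt
        · -- injective
          intro p hp q hq hfpq
          obtain ⟨hpS, _⟩ := Finset.mem_sdiff.mp hp
          obtain ⟨hqS, _⟩ := Finset.mem_sdiff.mp hq
          obtain ⟨hplt, hpwlt⟩ := (Finset.mem_filter.mp hpS).2
          obtain ⟨hqlt, hqwlt⟩ := (Finset.mem_filter.mp hqS).2
          by_cases hcp : p.1 = i ∧ j < p.2 <;> by_cases hcq : q.1 = i ∧ j < q.2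
          · simp only [if_pos hcp, if_pos hcq] at hfpq
            have : p.2 = q.2 := (Prod.ext_iff.mp hfpq).2
            exact Prod.ext (hcp.1.trans hcq.1.symm) this
          · simp only [if_pos hcp, if_neg hcq] at hfpq
            exfalso
            have hq1 : q.1 = j := (Prod.ext_iff.mp hfpq.symm).1
            have hq2 : q.2 = p.2 := (Prod.ext_iff.mp hfpq.symm).2
            have : i < w q.2 := h7 q.2 (h6.trans (hq2 ▸ hcp.2)) (ne_of_gt (hq2 ▸ hcp.2))
            rw [hq1, h4] at hqwlt
            exact absurd (hqwlt.trans this) (lt_irrefl _)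
          · simp only [if_neg hcp, if_pos hcq] at hfpq
            exfalso
            have hp1 : p.1 = j := (Prod.ext_iff.mp hfpq).1
            have hp2 : p.2 = q.2 := (Prod.ext_iff.mp hfpq).2
            have : i < w p.2 := h7 p.2 (h6.trans (hp2 ▸ hcq.2)) (ne_of_gt (hp2 ▸ hcq.2))
            rw [hp1, h4] at hpwlt
            exact absurd (hpwlt.trans this) (lt_irrefl _)
          · simp only [if_neg hcp, if_neg hcq] at hfpq
            exact hfpq
      have h1 : S.card ≤ (S \ Bad).card + Bad.card := Finset.card_le_card_sdiff_add_card
      have : invC w = S.card := rfl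
      have : invC w' = S'.card := rfl
      simp only [invC, ← hS, ← hS']
      omega
    omega

lemma invC_le_dis : ∀ (k : ℕ) (w : Equiv.Perm (Fin n)),
    (Finset.univ.filter fun p : Fin n => w p ≠ p).card ≤ k → invC w ≤ dis w := by
  intro k
  induction k with
  | zero =>
    intro w hw
    have hfix : ∀ p : Fin n, w p = p := by
      intro p
      by_contra hp
      have : p ∈ Finset.univ.filter fun p : Fin n => w p ≠ p := by simp [hp]
      rw [Finset.card_eq_zero.mp (Nat.le_zero.mp hw)] at this
      exact absurd this (Finset.notMem_empty p)
    have h0 : invC w = 0 := by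
      rw [invC, Finset.card_eq_zero]
      ext p
      simp only [Finset.mem_filter, Finset.mem_univ, true_and, Finset.notMem_empty, iff_false,
        not_and]
      intro h1 h2
      rw [hfix p.1, hfix p.2] at h2
      exact absurd (h1.trans h2) (lt_irrefl _)
    omega
  | succ k ih =>
    intro w hw
    by_cases hne : (Finset.univ.filter fun p : Fin n => w p ≠ p).Nonempty
    · obtain ⟨w', hcard, hlt⟩ := key w hne
      have hw' : (Finset.univ.filter fun p : Fin n => w' p ≠ p).card ≤ k := by omega
      have := ih w' hw'
      omega
    · rw [Finset.not_nonempty_iff_eq_empty] at hne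
      have hfix : ∀ p : Fin n, w p = p := by
        intro p
        by_contra hp
        have : p ∈ Finset.univ.filter fun p : Fin n => w p ≠ p := by simp [hp]
        rw [hne] at this
        exact absurd this (Finset.notMem_empty p)
      have h0 : invC w = 0 := by
        rw [invC, Finset.card_eq_zero]
        ext p
        simp only [Finset.mem_filter, Finset.mem_univ, true_and, Finset.notMem_empty, iff_false,
          not_and]
        intro h1 h2
        rw [hfix p.1, hfix p.2] at h2
        exact absurd (h1.trans h2) (lt_irrefl _)
      omega

end DG

/-- **Diaconis–Graham inequality.** For any permutation `w` of `{1,…,n}`,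
`dis(w)/2 ≤ inv(w) ≤ dis(w)`, where `dis(w) = ∑ᵢ |i - w(i)|` and
`inv(w)` is the number of inversions. -/
theorem diaconis_graham (n : ℕ) (w : Equiv.Perm (Fin n)) :
    (∑ i : Fin n, (((i : ℕ) : ℤ) - ((w i : ℕ) : ℤ)).natAbs) ≤
      2 * (Finset.univ.filter fun p : Fin n × Fin n => p.1 < p.2 ∧ w p.2 < w p.1).card ∧
    (Finset.univ.filter fun p : Fin n × Fin n => p.1 < p.2 ∧ w p.2 < w p.1).card ≤
      ∑ i : Fin n, (((i : ℕ) : ℤ) - ((w i : ℕ) : ℤ)).natAbs := by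
  exact ⟨DG.dis_le_two_mul w, DG.invC_le_dis _ w le_rfl⟩
end

section
/- For nonnegative integers k and n, det[C_{n-2+i+j}]_{i,j=1}^k = Π_{1≤i<j≤n} (2k+i+j-1)/(i+j-1), where C_m denotes the m-th Catalan number. -/
namespace ProctorAux
open Finset Polynomial Matrix

/-- Ballot-type numbers. -/
def bb (m t : ℕ) : ℚ := ((2*m).choose (m+t) : ℚ) - ((2*m).choose (m+t+1) : ℚ)

lemma bb_def (m t : ℕ) : bb m t = ((2*m).choose (m+t) : ℚ) - ((2*m).choose (m+t+1) : ℚ) := rfl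

lemma choose_ratio (N r : ℕ) :
    (N.choose (r+1) : ℚ) * (r+1) = (N.choose r : ℚ) * ((N : ℚ) - r) := by
  rcases le_or_gt r N with h | h
  · rw [← Nat.cast_sub h]
    exact_mod_cast Nat.choose_succ_right_eq N r
  · rw [Nat.choose_eq_zero_of_lt h, Nat.choose_eq_zero_of_lt (h.trans (Nat.lt_succ_self _))]
    simp

lemma bb_zero_of_lt {m t : ℕ} (h : m < t) : bb m t = 0 := by
  unfold bb
  rw [Nat.choose_eq_zero_of_lt (by omega), Nat.choose_eq_zero_of_lt (by omega)]
  simp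

lemma catalan_cast (m : ℕ) : ((m : ℚ) + 1) * (catalan m : ℚ) = ((2*m).choose m : ℚ) := by
  have := succ_mul_catalan_eq_centralBinom m
  rw [Nat.centralBinom] at this
  exact_mod_cast this

lemma bb_zero (m : ℕ) : bb m 0 = (catalan m : ℚ) := by
  have h1 := choose_ratio (2*m) m
  have h2 := catalan_cast m
  have hm : ((m : ℚ) + 1) ≠ 0 := by positivity
  apply mul_left_cancel₀ hm
  unfold bb
  rw [show m + 0 = m by omega, show m + 0 + 1 = m + 1 by omega]
  push_cast at h1 ⊢
  linear_combination - h1 - h2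

lemma choose_two_step (N r : ℕ) :
    ((N+2).choose (r+2) : ℚ)
      = (N.choose r : ℚ) + 2*(N.choose (r+1) : ℚ) + (N.choose (r+1+1) : ℚ) := by
  have h1 : (N+2).choose (r+2) = (N+1).choose (r+1) + (N+1).choose (r+1+1) :=
    Nat.choose_succ_succ _ _
  have h2 : (N+1).choose (r+1) = N.choose r + N.choose (r+1) := Nat.choose_succ_succ _ _
  have h3 : (N+1).choose (r+1+1) = N.choose (r+1) + N.choose (r+1+1) :=
    Nat.choose_succ_succ _ _
  rw [h1, h2, h3]
  push_cast
  ring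

lemma bb_rec (m t : ℕ) : bb (m+1) (t+1) = bb m t + 2 * bb m (t+1) + bb m (t+2) := by
  unfold bb
  simp only [show 2*(m+1) = 2*m+2 by ring, show (m+1)+(t+1) = m+t+2 by ring,
    show m+(t+1) = m+t+1 by ring, show m+(t+2) = m+t+2 by ring]
  rw [show m+t+2+1 = (m+t+1)+2 by ring, show m+t+2 = (m+t)+2 by ring,
    choose_two_step, choose_two_step]
  simp only [show (m+t)+1 = m+t+1 by ring, show m+t+1+1 = m+t+2 by ring,
    show (m+t+1)+2 = m+t+3 by ring, show m+t+2+1 = m+t+3 by ring]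
  ring

lemma bb_rec0 (m : ℕ) : bb (m+1) 0 = bb m 0 + bb m 1 := by
  have s1 : (2*m+1).choose m = (2*m+1).choose (m+1) := by
    have := Nat.choose_symm (show m ≤ 2*m+1 by omega)
    rw [show 2*m+1-m = m+1 by omega] at this
    exact this.symm
  have h1 : (2*m+2).choose (m+1) = (2*m+1).choose m + (2*m+1).choose (m+1) :=
    Nat.choose_succ_succ _ _
  have h2 : (2*m+1).choose (m+1) = (2*m).choose m + (2*m).choose (m+1) :=
    Nat.choose_succ_succ _ _
  have h3 : (2*m+2).choose (m+2) = (2*m+1).choose (m+1) + (2*m+1).choose (m+2) :=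
    Nat.choose_succ_succ _ _
  have h4 : (2*m+1).choose (m+2) = (2*m).choose (m+1) + (2*m).choose (m+2) :=
    Nat.choose_succ_succ _ _
  unfold bb
  rw [show 2*(m+1) = 2*m+2 by ring, show (m+1)+0 = m+1 by omega,
    show (m+1)+0+1 = m+2 by omega, show m+0 = m by omega, show m+0+1 = m+1 by omega,
    show m+1+1 = m+2 by omega, h1, s1, h2, h3, h4, h2]
  push_cast
  ring

lemma sum_trunc (p q N M : ℕ) (hp : p < N) (hNM : N ≤ M) :
    ∑ t ∈ range M, bb p t * bb q t = ∑ t ∈ range N, bb p t * bb q t := by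
  symm
  apply Finset.sum_subset (Finset.range_subset_range.2 hNM)
  intro t _ ht
  rw [bb_zero_of_lt (show p < t by simp [Finset.mem_range] at ht; omega), zero_mul]

lemma sum_symm (p q N : ℕ) :
    ∑ t ∈ range N, bb p t * bb q t = ∑ t ∈ range N, bb q t * bb p t := by
  exact Finset.sum_congr rfl fun t _ => mul_comm _ _

lemma sum_expand (p q M : ℕ) (hp : p < M) :
    ∑ t ∈ range (M+1), bb (p+1) t * bb q t
      = (∑ t ∈ range (M+1), bb p t * bb q (t+1))
        + (∑ t ∈ range (M+1), bb q t * bb p (t+1))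
        + 2 * (∑ t ∈ range (M+1), bb p t * bb q t)
        - bb p 0 * bb q 0 := by
  rw [Finset.sum_range_succ' (fun t => bb (p+1) t * bb q t) M]
  have e1 : ∀ t, bb (p+1) (t+1) * bb q (t+1)
      = bb p t * bb q (t+1) + 2 * (bb p (t+1) * bb q (t+1)) + bb p (t+2) * bb q (t+1) := by
    intro t; rw [bb_rec]; ring
  rw [Finset.sum_congr rfl fun t _ => e1 t]
  rw [Finset.sum_add_distrib, Finset.sum_add_distrib]
  have S1 : ∑ t ∈ range M, bb p t * bb q (t+1)
      = ∑ t ∈ range (M+1), bb p t * bb q (t+1) := by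
    rw [Finset.sum_range_succ, bb_zero_of_lt hp, zero_mul, add_zero]
  have S2 : ∑ t ∈ range M, 2 * (bb p (t+1) * bb q (t+1))
      = 2 * ((∑ t ∈ range (M+1), bb p t * bb q t) - bb p 0 * bb q 0) := by
    rw [← Finset.mul_sum]
    congr 1
    rw [Finset.sum_range_succ' (fun t => bb p t * bb q t) M]
    ring
  have S3 : ∑ t ∈ range M, bb p (t+2) * bb q (t+1)
      = (∑ t ∈ range (M+1), bb q t * bb p (t+1)) - bb q 0 * bb p 1 := by
    rw [Finset.sum_range_succ' (fun t => bb q t * bb p (t+1)) M]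
    simp only [add_sub_cancel_right]
    exact Finset.sum_congr rfl fun t _ => by ring
  rw [S1, S2, S3, bb_rec0]
  ring

lemma sum_exchange (p q M : ℕ) (hp : p < M) (hq : q < M) :
    ∑ t ∈ range (M+1), bb (p+1) t * bb q t = ∑ t ∈ range (M+1), bb p t * bb (q+1) t := by
  rw [sum_expand p q M hp, sum_symm p (q+1), sum_expand q p M hq, sum_symm q p]
  ring

lemma main_sum : ∀ p q N : ℕ, p < N →
    ∑ t ∈ range N, bb p t * bb q t = (catalan (p+q) : ℚ) := by
  intro p
  induction p with
  | zero =>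
    intro q N hN
    rw [Finset.sum_eq_single_of_mem 0 (Finset.mem_range.2 hN)
      (fun t _ ht => by rw [bb_zero_of_lt (by omega), zero_mul])]
    rw [bb_zero, bb_zero]
    norm_num [catalan_zero]
  | succ p ih =>
    intro q N hN
    set M := N + p + q + 1 with hM
    rw [← sum_trunc (p+1) q N (M+1) hN (by omega)]
    rw [sum_exchange p q M (by omega) (by omega)]
    rw [ih (q+1) (M+1) (by omega), show p+(q+1) = p+1+q by omega]

/-- key ratio: `(m+t+2)(2t+1) b(m,t+1) = (2t+3)(m-t) b(m,t)` -/
lemma bb_ratio (m t : ℕ) :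
    ((m:ℚ)+t+2) * (2*t+1) * bb m (t+1) = (2*(t:ℚ)+3) * ((m:ℚ)-t) * bb m t := by
  have e1 := choose_ratio (2*m) (m+t)
  have e2 := choose_ratio (2*m) (m+t+1)
  rw [bb_def, bb_def]
  rw [show m+(t+1) = m+t+1 by ring, show m+t+1+1 = (m+t+1)+1 by ring]
  push_cast at e1 e2 ⊢
  linear_combination (2*(t:ℚ)+3) * e1 - (2*(t:ℚ)+1) * e2

/-- The polynomial family (depends on `k`). -/
noncomputable def hp (k t : ℕ) : ℚ[X] :=
  Polynomial.C ((2*t+1 : ℕ) : ℚ) * (∏ s ∈ range t, (X - Polynomial.C ((s:ℚ)+1)))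
    * (∏ s ∈ Ico t (k-1), (X + Polynomial.C ((s:ℚ)+1)))

lemma hp_natDegree_lt {k t : ℕ} (ht : t < k) : (hp k t).natDegree < k := by
  have h1 : (∏ s ∈ range t, (X - Polynomial.C ((s:ℚ)+1))).natDegree ≤ t := by
    refine le_trans (Polynomial.natDegree_prod_le _ _) ?_
    calc ∑ s ∈ range t, (X - Polynomial.C ((s:ℚ)+1)).natDegree
        ≤ ∑ _s ∈ range t, 1 := by
          exact Finset.sum_le_sum fun s _ => (Polynomial.natDegree_X_sub_C _).le
      _ = t := by simp
  have h2 : (∏ s ∈ Ico t (k-1), (X + Polynomial.C ((s:ℚ)+1))).natDegree ≤ k-1-t := by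
    refine le_trans (Polynomial.natDegree_prod_le _ _) ?_
    calc ∑ s ∈ Ico t (k-1), (X + Polynomial.C ((s:ℚ)+1)).natDegree
        ≤ ∑ _s ∈ Ico t (k-1), 1 := by
          exact Finset.sum_le_sum fun s _ => (Polynomial.natDegree_X_add_C _).le
      _ = k-1-t := by simp [Nat.card_Ico]
  have := Polynomial.natDegree_mul_le
    (p := Polynomial.C ((2*t+1 : ℕ) : ℚ) * (∏ s ∈ range t, (X - Polynomial.C ((s:ℚ)+1))))
    (q := ∏ s ∈ Ico t (k-1), (X + Polynomial.C ((s:ℚ)+1)))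
  have h3 := Polynomial.natDegree_mul_le
    (p := Polynomial.C ((2*t+1 : ℕ) : ℚ)) (q := ∏ s ∈ range t, (X - Polynomial.C ((s:ℚ)+1)))
  have h4 : (Polynomial.C ((2*t+1 : ℕ) : ℚ)).natDegree = 0 := Polynomial.natDegree_C _
  rw [hp]
  omega

/-- Main scaling claim. -/
lemma claim (k : ℕ) : ∀ t m : ℕ, t < k →
    bb m t * (∏ s ∈ range (k-1), ((m:ℚ)+2+s))
      = (catalan m : ℚ) * (hp k t).eval ((m:ℚ)+1) := by
  intro t
  induction t with
  | zero =>
    intro m _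
    have h1 : ((2*0+1 : ℕ) : ℚ) = 1 := by norm_num
    rw [bb_zero, hp, h1]
    simp only [range_zero, prod_empty, mul_one, one_mul, Polynomial.eval_mul,
      Polynomial.eval_one, Polynomial.eval_prod, Polynomial.eval_add, Polynomial.eval_X,
      Polynomial.eval_C]
    rw [← Finset.range_eq_Ico]
    congr 1
    exact Finset.prod_congr rfl fun s _ => by push_cast; ring
  | succ t ih =>
    intro m ht1
    have ht : t < k := by omega
    have htk : t < k - 1 := by omega
    have hne : ((m:ℚ)+t+2) * (2*(t:ℚ)+1) ≠ 0 := by positivity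
    apply mul_left_cancel₀ hne
    have lhs_eq : ((m:ℚ)+t+2) * (2*(t:ℚ)+1) * (bb m (t+1) * (∏ s ∈ range (k-1), ((m:ℚ)+2+s)))
        = ((2*(t:ℚ)+3) * ((m:ℚ)-t) * bb m t) * (∏ s ∈ range (k-1), ((m:ℚ)+2+s)) := by
      rw [← bb_ratio]; ring
    rw [lhs_eq]
    have hIH := ih m ht
    have hsplit : (hp k t).eval ((m:ℚ)+1) = ((2*t+1 : ℕ) : ℚ)
        * (∏ s ∈ range t, ((m:ℚ)+1 - ((s:ℚ)+1)))
        * (((m:ℚ)+1 + ((t:ℚ)+1)) * ∏ s ∈ Ico (t+1) (k-1), ((m:ℚ)+1 + ((s:ℚ)+1))) := by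
      rw [hp]
      simp only [Polynomial.eval_mul, Polynomial.eval_C, Polynomial.eval_prod,
        Polynomial.eval_add, Polynomial.eval_sub, Polynomial.eval_X]
      rw [Finset.prod_eq_prod_Ico_succ_bot htk (fun s => (m:ℚ)+1 + ((s:ℚ)+1))]
    have hsplit2 : (hp k (t+1)).eval ((m:ℚ)+1) = ((2*(t+1)+1 : ℕ) : ℚ)
        * ((∏ s ∈ range t, ((m:ℚ)+1 - ((s:ℚ)+1))) * ((m:ℚ)+1 - ((t:ℚ)+1)))
        * (∏ s ∈ Ico (t+1) (k-1), ((m:ℚ)+1 + ((s:ℚ)+1))) := by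
      rw [hp]
      simp only [Polynomial.eval_mul, Polynomial.eval_C, Polynomial.eval_prod,
        Polynomial.eval_add, Polynomial.eval_sub, Polynomial.eval_X]
      rw [Finset.prod_range_succ (fun s => (m:ℚ)+1 - ((s:ℚ)+1)) t]
    calc (2*(t:ℚ)+3) * ((m:ℚ)-t) * bb m t * (∏ s ∈ range (k-1), ((m:ℚ)+2+s))
        = (2*(t:ℚ)+3) * ((m:ℚ)-t) * ((catalan m : ℚ) * (hp k t).eval ((m:ℚ)+1)) := by
          rw [← hIH]; ring
      _ = ((m:ℚ)+t+2) * (2*(t:ℚ)+1) * ((catalan m : ℚ) * (hp k (t+1)).eval ((m:ℚ)+1)) := by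
          rw [hsplit, hsplit2]; push_cast; ring

lemma bb_diag (i : ℕ) : bb i i = 1 := by
  rw [bb_def, show i+i = 2*i by ring, Nat.choose_self,
    Nat.choose_eq_zero_of_lt (by omega)]
  norm_num

lemma hp_eval_zero {k : ℕ} {u t : Fin k} (h : u < t) :
    (hp k (t:ℕ)).eval (((u:ℕ):ℚ)+1) = 0 := by
  rw [hp]
  simp only [Polynomial.eval_mul, Polynomial.eval_C, Polynomial.eval_prod,
    Polynomial.eval_add, Polynomial.eval_sub, Polynomial.eval_X]
  apply mul_eq_zero_of_left
  apply mul_eq_zero_of_right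
  apply Finset.prod_eq_zero (Finset.mem_range.2 (show (u:ℕ) < (t:ℕ) from h))
  ring

lemma det_key (k n : ℕ) :
    (∏ j ∈ range k, ∏ s ∈ range (k-1), (((n+j : ℕ):ℚ)+2+s))
      * Matrix.det (Matrix.of fun i j : Fin k => (catalan (n+(i:ℕ)+(j:ℕ)) : ℚ))
    = (∏ j ∈ range k, (catalan (n+j) : ℚ)) * (∏ j ∈ range k, (hp k j).eval ((j:ℚ)+1)) := by
  classical
  set B : Matrix (Fin k) (Fin k) ℚ := Matrix.of fun i t : Fin k => bb i t with hB
  set B2 : Matrix (Fin k) (Fin k) ℚ := Matrix.of fun j t : Fin k => bb (n+j) t with hB2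
  set Mx : Matrix (Fin k) (Fin k) ℚ := Matrix.of fun p t : Fin k => (hp k t).coeff p with hMx
  set xs : Fin k → ℚ := fun j => ((n+(j:ℕ) : ℕ) : ℚ) + 1 with hxs
  set ys : Fin k → ℚ := fun u => ((u:ℕ) : ℚ) + 1 with hys
  have hA : (Matrix.of fun i j : Fin k => (catalan (n+(i:ℕ)+(j:ℕ)) : ℚ)) = B * B2ᵀ := by
    ext i j
    simp only [Matrix.mul_apply, Matrix.transpose_apply, hB, hB2, Matrix.of_apply]
    rw [Fin.sum_univ_eq_sum_range (fun t => bb i t * bb (n+j) t) k,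
      main_sum i (n+j) k i.isLt, show (i:ℕ)+(n+(j:ℕ)) = n+i+j by omega]
  have hdetB : B.det = 1 := by
    have hlow : B.BlockTriangular OrderDual.toDual := by
      intro i j hij
      exact bb_zero_of_lt (show (i:ℕ) < (j:ℕ) from hij)
    rw [Matrix.det_of_lowerTriangular B hlow]
    exact Finset.prod_eq_one fun i _ => bb_diag i
  have hVM : ∀ (x : ℚ) (t : Fin k),
      (∑ p : Fin k, x^(p:ℕ) * (hp k (t:ℕ)).coeff p) = (hp k (t:ℕ)).eval x := by
    intro x t
    rw [Polynomial.eval_eq_sum_range' (hp_natDegree_lt t.isLt) x,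
      ← Fin.sum_univ_eq_sum_range (fun p => (hp k (t:ℕ)).coeff p * x^p) k]
    exact Finset.sum_congr rfl fun p _ => mul_comm _ _
  have hDB2 : Matrix.diagonal (fun j : Fin k => ∏ s ∈ range (k-1), (((n+(j:ℕ) : ℕ):ℚ)+2+s)) * B2
      = Matrix.diagonal (fun j : Fin k => (catalan (n+(j:ℕ)) : ℚ)) * (Matrix.vandermonde xs * Mx) := by
    ext j t
    rw [Matrix.diagonal_mul, Matrix.diagonal_mul, Matrix.mul_apply]
    simp only [Matrix.vandermonde, hMx, Matrix.of_apply, hB2]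
    rw [show ∑ p : Fin k, xs j ^ (p:ℕ) * (hp k (t:ℕ)).coeff p = (hp k (t:ℕ)).eval (xs j) from hVM _ t]
    rw [mul_comm ((∏ s ∈ range (k-1), (((n+(j:ℕ) : ℕ):ℚ)+2+(s:ℚ)))) _]
    exact claim k t (n+j) t.isLt
  have hR' : (Matrix.of fun u t : Fin k => (hp k (t:ℕ)).eval (((u:ℕ):ℚ)+1))
      = Matrix.vandermonde ys * Mx := by
    ext u t
    rw [Matrix.mul_apply]
    simp only [Matrix.vandermonde, hMx, Matrix.of_apply]
    exact (hVM (ys u) t).symm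
  have hdetR' : (Matrix.of fun u t : Fin k => (hp k (t:ℕ)).eval (((u:ℕ):ℚ)+1)).det
      = ∏ u : Fin k, (hp k (u:ℕ)).eval (((u:ℕ):ℚ)+1) := by
    have hlow : (Matrix.of fun u t : Fin k => (hp k (t:ℕ)).eval (((u:ℕ):ℚ)+1)).BlockTriangular
        OrderDual.toDual := by
      intro u t hut
      exact hp_eval_zero (show u < t from hut)
    rw [Matrix.det_of_lowerTriangular _ hlow]
    rfl
  have hVV : (Matrix.vandermonde xs).det = (Matrix.vandermonde ys).det := by
    rw [Matrix.det_vandermonde, Matrix.det_vandermonde]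
    refine Finset.prod_congr rfl fun i _ => Finset.prod_congr rfl fun j _ => ?_
    simp only [hxs, hys]
    push_cast
    ring
  have hVy0 : (Matrix.vandermonde ys).det ≠ 0 := by
    rw [Matrix.det_vandermonde_ne_zero_iff]
    intro a b hab
    simp only [hys] at hab
    have : ((a:ℕ):ℚ) = ((b:ℕ):ℚ) := by linarith
    exact Fin.ext (by exact_mod_cast this)
  have hdets := congrArg Matrix.det hDB2
  rw [Matrix.det_mul, Matrix.det_mul, Matrix.det_mul, Matrix.det_diagonal,
    Matrix.det_diagonal] at hdets
  have hdetR'2 : (Matrix.vandermonde ys).det * Mx.det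
      = ∏ u : Fin k, (hp k (u:ℕ)).eval (((u:ℕ):ℚ)+1) := by
    rw [← hdetR', hR', Matrix.det_mul]
  have hdetA : (Matrix.of fun i j : Fin k => (catalan (n+(i:ℕ)+(j:ℕ)) : ℚ)).det = B2.det := by
    rw [hA, Matrix.det_mul, hdetB, one_mul, Matrix.det_transpose]
  rw [hdetA]
  rw [← Fin.prod_univ_eq_prod_range (fun j => ∏ s ∈ range (k-1), (((n+j : ℕ):ℚ)+2+s)) k,
    ← Fin.prod_univ_eq_prod_range (fun j => (catalan (n+j) : ℚ)) k,
    ← Fin.prod_univ_eq_prod_range (fun j => (hp k j).eval ((j:ℚ)+1)) k]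
  apply mul_right_cancel₀ hVy0
  calc (∏ j : Fin k, ∏ s ∈ range (k-1), (((n+(j:ℕ) : ℕ):ℚ)+2+s)) * B2.det * (Matrix.vandermonde ys).det
      = ((∏ j : Fin k, ∏ s ∈ range (k-1), (((n+(j:ℕ) : ℕ):ℚ)+2+s)) * B2.det) * (Matrix.vandermonde ys).det := by ring
    _ = ((∏ j : Fin k, (catalan (n+(j:ℕ)) : ℚ)) * ((Matrix.vandermonde xs).det * Mx.det)) * (Matrix.vandermonde ys).det := by rw [hdets]
    _ = (∏ j : Fin k, (catalan (n+(j:ℕ)) : ℚ)) * (Matrix.vandermonde xs).det * ((Matrix.vandermonde ys).det * Mx.det) := by ring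
    _ = (∏ j : Fin k, (catalan (n+(j:ℕ)) : ℚ)) * (Matrix.vandermonde ys).det * (∏ u : Fin k, (hp k (u:ℕ)).eval (((u:ℕ):ℚ)+1)) := by rw [hVV, hdetR'2]; try ring
    _ = (∏ j : Fin k, (catalan (n+(j:ℕ)) : ℚ)) * (∏ u : Fin k, (hp k (u:ℕ)).eval (((u:ℕ):ℚ)+1)) * (Matrix.vandermonde ys).det := by ring

lemma fact_prod (a : ℕ) : ∀ M : ℕ,
    (a.factorial : ℚ) * ∏ i ∈ range M, ((a:ℚ)+1+i) = ((a+M).factorial : ℚ) := by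
  intro M
  induction M with
  | zero => simp
  | succ M ih =>
    rw [Finset.prod_range_succ, ← mul_assoc, ih, show a+(M+1) = (a+M)+1 by omega,
      Nat.factorial_succ]
    push_cast
    ring

lemma cat_fact (m : ℕ) :
    (catalan m : ℚ) * ((m.factorial : ℚ) * ((m+1).factorial : ℚ)) = ((2*m).factorial : ℚ) := by
  have h1 : (m+1) * catalan m * (m.factorial * m.factorial) = (2*m).factorial := by
    rw [succ_mul_catalan_eq_centralBinom, Nat.centralBinom]
    have := Nat.choose_mul_factorial_mul_factorial (show m ≤ 2*m by omega)
    rw [show 2*m - m = m by omega] at this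
    rw [← this]
    ring
  have : catalan m * (m.factorial * (m+1).factorial) = (2*m).factorial := by
    rw [Nat.factorial_succ, ← h1]
    ring
  exact_mod_cast this

lemma catalan_cast_ne (m : ℕ) : (catalan m : ℚ) ≠ 0 := by
  have h := cat_fact m
  intro h0
  rw [h0, zero_mul] at h
  exact (Nat.cast_ne_zero.2 (Nat.factorial_pos (2*m)).ne') h.symm

lemma prod_descend : ∀ j : ℕ, ∏ s ∈ range j, ((j:ℚ) - s) = (j.factorial : ℚ) := by
  intro j
  induction j with
  | zero => simp
  | succ j ih =>
    push_cast
    rw [Finset.prod_range_succ' (fun s => ((j:ℚ)+1 - s)) j]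
    rw [show ∏ s ∈ range j, ((j:ℚ)+1-((s+1:ℕ):ℚ)) = ∏ s ∈ range j, ((j:ℚ)-s) from
      Finset.prod_congr rfl fun s _ => by push_cast; ring]
    rw [ih, Nat.factorial_succ]
    push_cast
    ring

lemma E_eval {k j : ℕ} (hj : j < k) :
    (hp k j).eval ((j:ℚ)+1)
      = ((2*j+1 : ℕ) : ℚ) * (j.factorial : ℚ) * ∏ s ∈ Ico j (k-1), ((j:ℚ)+2+s) := by
  rw [hp]
  simp only [Polynomial.eval_mul, Polynomial.eval_C, Polynomial.eval_prod,
    Polynomial.eval_add, Polynomial.eval_sub, Polynomial.eval_X]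
  rw [show ∏ s ∈ range j, ((j:ℚ)+1-((s:ℚ)+1)) = ∏ s ∈ range j, ((j:ℚ)-s) from
    Finset.prod_congr rfl fun s _ => by ring, prod_descend]
  congr 1
  exact Finset.prod_congr rfl fun s _ => by ring

lemma base_factor {k j : ℕ} (hj : j < k) :
    (catalan j : ℚ) * (hp k j).eval ((j:ℚ)+1) = ∏ s ∈ range (k-1), ((j:ℚ)+2+s) := by
  rw [E_eval hj, ← Finset.prod_range_mul_prod_Ico (fun s => ((j:ℚ)+2+s)) (show j ≤ k-1 by omega)]
  have hne : ((j+1).factorial : ℚ) ≠ 0 := by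
    exact_mod_cast (Nat.factorial_pos (j+1)).ne'
  have hmain : (catalan j : ℚ) * (((2*j+1 : ℕ)) : ℚ) * (j.factorial : ℚ) * ((j+1).factorial : ℚ)
      = (∏ s ∈ range j, ((j:ℚ)+2+s)) * ((j+1).factorial : ℚ) := by
    have f1 := fact_prod (j+1) j
    have e1 : ∏ i ∈ range j, (((j+1 : ℕ):ℚ)+1+i) = ∏ s ∈ range j, ((j:ℚ)+2+s) :=
      Finset.prod_congr rfl fun s _ => by push_cast; ring
    rw [e1] at f1
    have c1 := cat_fact j
    calc (catalan j : ℚ) * (((2*j+1 : ℕ)) : ℚ) * (j.factorial : ℚ) * ((j+1).factorial : ℚ)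
        = ((catalan j : ℚ) * ((j.factorial : ℚ) * ((j+1).factorial : ℚ))) * (((2*j+1 : ℕ)) : ℚ) := by
          push_cast; ring
      _ = ((2*j).factorial : ℚ) * (((2*j+1 : ℕ)) : ℚ) := by rw [c1]
      _ = ((2*j+1).factorial : ℚ) := by
          rw [Nat.factorial_succ]
          push_cast; ring
      _ = ((j+1).factorial : ℚ) * ∏ s ∈ range j, ((j:ℚ)+2+s) := by
          rw [show j+1+j = 2*j+1 by omega] at f1
          rw [← f1]
      _ = (∏ s ∈ range j, ((j:ℚ)+2+s)) * ((j+1).factorial : ℚ) := by ring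
  have := mul_right_cancel₀ hne hmain
  rw [mul_assoc]
  rw [← this]
  ring

lemma key_step (k n : ℕ) :
    (catalan (n+k) : ℚ) * (∏ s ∈ range (k-1), ((n:ℚ)+2+s)) * (∏ i ∈ range n, ((n:ℚ)+1+i))
      = (catalan n : ℚ) * (∏ s ∈ range (k-1), ((n:ℚ)+(k:ℚ)+2+s))
        * (∏ i ∈ range n, (2*(k:ℚ)+(n:ℚ)+1+i)) := by
  rcases Nat.eq_zero_or_pos k with rfl | hk
  · simp
  have hfne : ∀ m : ℕ, ((m.factorial : ℕ) : ℚ) ≠ 0 := fun m =>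
    Nat.cast_ne_zero.2 (Nat.factorial_pos m).ne'
  have f1 : ((n+1).factorial : ℚ) * ∏ s ∈ range (k-1), ((n:ℚ)+2+s) = ((n+k).factorial : ℚ) := by
    have := fact_prod (n+1) (k-1)
    rw [show n+1+(k-1) = n+k by omega] at this
    rw [← this]
    congr 1
    exact Finset.prod_congr rfl fun s _ => by push_cast; ring
  have f2 : (n.factorial : ℚ) * ∏ i ∈ range n, ((n:ℚ)+1+i) = ((2*n).factorial : ℚ) := by
    have := fact_prod n n
    rw [show n+n = 2*n by omega] at this
    exact this
  have f3 : ((n+k+1).factorial : ℚ) * ∏ s ∈ range (k-1), ((n:ℚ)+(k:ℚ)+2+s)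
      = ((n+2*k).factorial : ℚ) := by
    have := fact_prod (n+k+1) (k-1)
    rw [show n+k+1+(k-1) = n+2*k by omega] at this
    rw [← this]
    congr 1
    exact Finset.prod_congr rfl fun s _ => by push_cast; ring
  have f4 : ((2*k+n).factorial : ℚ) * ∏ i ∈ range n, (2*(k:ℚ)+(n:ℚ)+1+i)
      = ((2*k+2*n).factorial : ℚ) := by
    have := fact_prod (2*k+n) n
    rw [show 2*k+n+n = 2*k+2*n by omega] at this
    rw [← this]
    congr 1
    exact Finset.prod_congr rfl fun s _ => by push_cast; ring
  have c1 : (catalan (n+k) : ℚ) * (((n+k).factorial : ℚ) * ((n+k+1).factorial : ℚ))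
      = ((2*k+2*n).factorial : ℚ) := by
    have := cat_fact (n+k)
    rw [show 2*(n+k) = 2*k+2*n by omega] at this
    exact this
  have c2 : (catalan n : ℚ) * ((n.factorial : ℚ) * ((n+1).factorial : ℚ))
      = ((2*n).factorial : ℚ) := cat_fact n
  have hP2 : (∏ s ∈ range (k-1), ((n:ℚ)+2+s)) = ((n+k).factorial : ℚ) / ((n+1).factorial : ℚ) := by
    field_simp
    linarith [f1]
  have hCn : (∏ i ∈ range n, ((n:ℚ)+1+i)) = ((2*n).factorial : ℚ) / (n.factorial : ℚ) := by
    field_simp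
    linarith [f2]
  have hP3 : (∏ s ∈ range (k-1), ((n:ℚ)+(k:ℚ)+2+s))
      = ((n+2*k).factorial : ℚ) / ((n+k+1).factorial : ℚ) := by
    field_simp
    linarith [f3]
  have hDn : (∏ i ∈ range n, (2*(k:ℚ)+(n:ℚ)+1+i))
      = ((2*k+2*n).factorial : ℚ) / ((2*k+n).factorial : ℚ) := by
    field_simp
    linarith [f4]
  have hc1 : (catalan (n+k) : ℚ)
      = ((2*k+2*n).factorial : ℚ) / (((n+k).factorial : ℚ) * ((n+k+1).factorial : ℚ)) := by
    rw [eq_div_iff (by positivity)]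
    exact c1
  have hc2 : (catalan n : ℚ)
      = ((2*n).factorial : ℚ) / ((n.factorial : ℚ) * ((n+1).factorial : ℚ)) := by
    rw [eq_div_iff (by positivity)]
    exact c2
  rw [hP2, hCn, hP3, hDn, hc1, hc2]
  rw [show n+2*k = 2*k+n by omega]
  field_simp

lemma tele (f : ℕ → ℚ) (n k : ℕ) :
    (∏ j ∈ range k, f (n+1+j)) * f n = (∏ j ∈ range k, f (n+j)) * f (n+k) := by
  have h1 := Finset.prod_range_succ (fun j => f (n+j)) k
  have h2 := Finset.prod_range_succ' (fun j => f (n+j)) k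
  rw [show (∏ j ∈ range k, f (n+1+j)) = ∏ j ∈ range k, f (n+(j+1)) from
    Finset.prod_congr rfl fun j _ => by rw [show n+1+j = n+(j+1) by omega]]
  rw [show f n = f (n+0) from by rw [Nat.add_zero], ← h2, h1]

noncomputable def RHSg (k n : ℕ) : ℚ :=
  ∏ j ∈ range n, ∏ i ∈ range j, ((2*(k:ℚ)+i+j+1)/((i:ℚ)+(j:ℚ)+1))

noncomputable def Q (k m : ℕ) : ℚ := ∏ s ∈ range (k-1), ((m:ℚ)+2+s)

lemma Q_pos (k m : ℕ) : 0 < Q k m := Finset.prod_pos fun s _ => by positivity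

lemma prod_formula (k : ℕ) : ∀ n : ℕ,
    (∏ j ∈ range k, (catalan (n+j) : ℚ)) * (∏ j ∈ range k, (hp k j).eval ((j:ℚ)+1))
      = (∏ j ∈ range k, Q k (n+j)) * RHSg k n := by
  intro n
  induction n with
  | zero =>
    rw [RHSg]
    simp only [range_zero, prod_empty, mul_one, Nat.zero_add]
    rw [← Finset.prod_mul_distrib]
    exact Finset.prod_congr rfl fun j hj => by
      rw [Q]
      exact base_factor (Finset.mem_range.1 hj)
  | succ n ih =>
    have e2 := tele (fun m => (catalan m : ℚ)) n k
    have e3 := tele (Q k) n k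
    have e4 : (catalan (n+k) : ℚ) * Q k n * (∏ i ∈ range n, ((n:ℚ)+1+i))
        = (catalan n : ℚ) * Q k (n+k) * (∏ i ∈ range n, (2*(k:ℚ)+(n:ℚ)+1+i)) := by
      have := key_step k n
      rw [Q, Q]
      rw [show (∏ s ∈ range (k-1), (((n+k : ℕ):ℚ)+2+s))
          = ∏ s ∈ range (k-1), ((n:ℚ)+(k:ℚ)+2+s) from
        Finset.prod_congr rfl fun s _ => by push_cast; ring]
      exact this
    have hCne : (∏ i ∈ range n, ((n:ℚ)+1+i)) ≠ 0 :=
      (Finset.prod_pos fun i _ => by positivity).ne'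
    have e5 : RHSg k (n+1) * (∏ i ∈ range n, ((n:ℚ)+1+i))
        = RHSg k n * (∏ i ∈ range n, (2*(k:ℚ)+(n:ℚ)+1+i)) := by
      rw [RHSg, Finset.prod_range_succ, ← RHSg]
      rw [Finset.prod_div_distrib]
      rw [show (∏ i ∈ range n, ((i:ℚ)+(n:ℚ)+1)) = ∏ i ∈ range n, ((n:ℚ)+1+i) from
        Finset.prod_congr rfl fun i _ => by ring]
      rw [show (∏ i ∈ range n, (2*(k:ℚ)+i+n+1)) = ∏ i ∈ range n, (2*(k:ℚ)+(n:ℚ)+1+i) from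
        Finset.prod_congr rfl fun i _ => by ring]
      rw [mul_assoc, div_mul_cancel₀ _ hCne]
    have hne : (catalan n : ℚ) * Q k n * (∏ i ∈ range n, ((n:ℚ)+1+i)) ≠ 0 := by
      exact mul_ne_zero (mul_ne_zero (catalan_cast_ne n) (Q_pos k n).ne') hCne
    apply mul_right_cancel₀ hne
    linear_combination
      ((∏ j ∈ range k, (hp k j).eval ((j:ℚ)+1)) * Q k n * (∏ i ∈ range n, ((n:ℚ)+1+i))) * e2
      + ((catalan (n+k) : ℚ) * Q k n * (∏ i ∈ range n, ((n:ℚ)+1+i))) * ih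
      + ((∏ j ∈ range k, Q k (n+j)) * RHSg k n) * e4
      - ((∏ j ∈ range k, Q k (n+j)) * Q k (n+k) * (catalan n : ℚ)) * e5
      - (RHSg k (n+1) * (∏ i ∈ range n, ((n:ℚ)+1+i)) * (catalan n : ℚ)) * e3

end ProctorAux

open ProctorAux Finset in
/-- **Proctor's determinant formula.** For nonnegative integers `k` and `n`,
`det[C_{n-2+i+j}]_{i,j=1}^k = ∏_{1 ≤ i < j ≤ n} (2k+i+j-1)/(i+j-1)`,
where `C_m` is the `m`-th Catalan number. (Indices `i,j` run over `Fin k`,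
0-based, so the entry is `C_{n+i+j}`; the product is over pairs of 1-based
indices `1 ≤ i < j ≤ n`.) -/
theorem catalan_hankel_det (k n : ℕ) :
    Matrix.det (Matrix.of fun i j : Fin k => (catalan (n + (i : ℕ) + (j : ℕ)) : ℚ)) =
      ∏ p ∈ (Finset.univ : Finset (Fin n × Fin n)).filter (fun p => p.1 < p.2),
        ((2 * k + ((p.1 : ℕ) + 1) + ((p.2 : ℕ) + 1) - 1 : ℚ) /
          (((p.1 : ℕ) + 1) + ((p.2 : ℕ) + 1) - 1 : ℚ)) := by
  classical
  have hQprod_ne : (∏ j ∈ range k, Q k (n+j)) ≠ 0 :=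
    (Finset.prod_pos fun j _ => Q_pos k (n+j)).ne'
  have hdet : Matrix.det (Matrix.of fun i j : Fin k => (catalan (n + (i : ℕ) + (j : ℕ)) : ℚ))
      = RHSg k n := by
    apply mul_left_cancel₀ hQprod_ne
    have hd := det_key k n
    have hshape : (∏ j ∈ range k, ∏ s ∈ range (k-1), (((n+j : ℕ):ℚ)+2+s))
        = ∏ j ∈ range k, Q k (n+j) := rfl
    rw [hshape] at hd
    rw [hd, prod_formula k n]
  rw [hdet]
  -- now convert RHSg to the filtered Fin product
  rw [RHSg]
  symm
  rw [Finset.prod_filter]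
  rw [Fintype.prod_prod_type
    (f := fun p : Fin n × Fin n => if p.1 < p.2 then
      ((2 * (k:ℚ) + ((p.1 : ℕ) + 1) + ((p.2 : ℕ) + 1) - 1 : ℚ) /
          (((p.1 : ℕ) + 1) + ((p.2 : ℕ) + 1) - 1 : ℚ)) else 1)]
  rw [Finset.prod_comm]
  have inner : ∀ j : Fin n,
      (∏ i : Fin n, if i < j then
        ((2 * (k:ℚ) + ((i : ℕ) + 1) + ((j : ℕ) + 1) - 1 : ℚ) /
          (((i : ℕ) + 1) + ((j : ℕ) + 1) - 1 : ℚ)) else 1)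
      = ∏ i ∈ range (j:ℕ), ((2*(k:ℚ)+i+(j:ℕ)+1)/((i:ℚ)+((j:ℕ):ℚ)+1)) := by
    intro j
    have step : ∀ i : Fin n,
        (if i < j then
          ((2 * (k:ℚ) + ((i : ℕ) + 1) + ((j : ℕ) + 1) - 1 : ℚ) /
            (((i : ℕ) + 1) + ((j : ℕ) + 1) - 1 : ℚ)) else 1)
        = (fun iv : ℕ => if iv < (j:ℕ) then
            ((2*(k:ℚ)+iv+(j:ℕ)+1)/((iv:ℚ)+((j:ℕ):ℚ)+1)) else 1) (i : ℕ) := by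
      intro i
      beta_reduce
      by_cases h : (i:ℕ) < (j:ℕ)
      · rw [if_pos (show i < j from h), if_pos h]
        push_cast
        ring_nf
      · rw [if_neg (show ¬ i < j from h), if_neg h]
    rw [Finset.prod_congr rfl fun i _ => step i]
    rw [Fin.prod_univ_eq_prod_range (fun iv : ℕ => if iv < (j:ℕ) then
        ((2*(k:ℚ)+iv+(j:ℕ)+1)/((iv:ℚ)+((j:ℕ):ℚ)+1)) else 1) n]
    rw [← Finset.prod_range_mul_prod_Ico _ (le_of_lt j.isLt)]
    rw [Finset.prod_congr rfl (fun i hi => if_pos (Finset.mem_range.1 hi)),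
      Finset.prod_eq_one (fun i hi => if_neg (by
        have := (Finset.mem_Ico.1 hi).1; omega)), mul_one]
  rw [Finset.prod_congr rfl fun j _ => inner j]
  rw [Fin.prod_univ_eq_prod_range (fun jv : ℕ =>
    ∏ i ∈ range jv, ((2*(k:ℚ)+i+jv+1)/((i:ℚ)+(jv:ℚ)+1))) n]
end

section
/- For p ∈ (0,1), the function γ_p = 1 − √((1−p)/p)·arccos(√(1−p)) satisfies 0 < γ_p < 1, γ_p is strictly increasing in p, γ_p → 0 as p → 0⁺, and γ_p → 1 as p → 1⁻. -/
open Real Set Filter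

/-- `γ_p = 1 − √((1−p)/p)·arccos(√(1−p))`. -/
noncomputable def gammaP (p : ℝ) : ℝ :=
  1 - Real.sqrt ((1 - p) / p) * Real.arccos (Real.sqrt (1 - p))

noncomputable def hFun (θ : ℝ) : ℝ := θ * Real.cos θ / Real.sin θ

lemma theta_mem {p : ℝ} (hp : p ∈ Set.Ioo (0:ℝ) 1) :
    Real.arccos (Real.sqrt (1 - p)) ∈ Set.Ioo 0 (π/2) := by
  constructor
  · rw [Real.arccos_pos]
    exact (Real.sqrt_lt' one_pos).2 (by nlinarith [hp.1])
  · rw [Real.arccos_lt_pi_div_two]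
    exact Real.sqrt_pos.2 (by linarith [hp.2])

lemma gammaP_eq {p : ℝ} (hp : p ∈ Set.Ioo (0:ℝ) 1) :
    (1 : ℝ) - Real.sqrt ((1 - p) / p) * Real.arccos (Real.sqrt (1 - p))
      = 1 - hFun (Real.arccos (Real.sqrt (1 - p))) := by
  have h1 : (0:ℝ) ≤ 1 - p := by linarith [hp.2]
  have hcos : Real.cos (Real.arccos (Real.sqrt (1 - p))) = Real.sqrt (1 - p) :=
    Real.cos_arccos (le_trans (by norm_num) (Real.sqrt_nonneg _)) (Real.sqrt_le_one.2 (by linarith [hp.1]))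
  have hsin : Real.sin (Real.arccos (Real.sqrt (1 - p))) = Real.sqrt p := by
    rw [Real.sin_arccos, Real.sq_sqrt h1]
    ring_nf
  rw [hFun, hcos, hsin, Real.sqrt_div h1]
  ring

lemma hFun_bounds {θ : ℝ} (hθ : θ ∈ Set.Ioo 0 (π/2)) : 0 < hFun θ ∧ hFun θ < 1 := by
  have hc : 0 < Real.cos θ := Real.cos_pos_of_mem_Ioo ⟨by linarith [hθ.1, pi_pos], hθ.2⟩
  have hs : 0 < Real.sin θ := Real.sin_pos_of_pos_of_lt_pi hθ.1 (by linarith [hθ.2, pi_pos])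
  constructor
  · exact div_pos (mul_pos hθ.1 hc) hs
  · rw [hFun, div_lt_one hs]
    have := Real.lt_tan hθ.1 hθ.2
    rw [Real.tan_eq_sin_div_cos, lt_div_iff₀ hc] at this
    linarith

lemma hFun_hasDeriv {θ : ℝ} (hθ : θ ∈ Set.Ioo 0 (π/2)) :
    HasDerivAt hFun ((Real.sin θ * Real.cos θ - θ) / Real.sin θ ^ 2) θ := by
  have hs : 0 < Real.sin θ := Real.sin_pos_of_pos_of_lt_pi hθ.1 (by linarith [hθ.2, pi_pos])
  have h1 : HasDerivAt (fun x : ℝ => x * Real.cos x)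
      (1 * Real.cos θ + θ * (-Real.sin θ)) θ :=
    (hasDerivAt_id θ).mul (Real.hasDerivAt_cos θ)
  have h2 : HasDerivAt hFun _ θ := h1.div (Real.hasDerivAt_sin θ) hs.ne'
  convert h2 using 2
  linear_combination θ * Real.sin_sq_add_cos_sq θ

lemma hFun_strictAnti : StrictAntiOn hFun (Set.Ioo 0 (π/2)) := by
  have hderiv : ∀ θ ∈ interior (Set.Ioo 0 (π/2)), deriv hFun θ < 0 := by
    intro θ hθ
    rw [interior_Ioo] at hθ
    rw [(hFun_hasDeriv hθ).deriv]
    have hs : 0 < Real.sin θ := Real.sin_pos_of_pos_of_lt_pi hθ.1 (by linarith [hθ.2, pi_pos])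
    have hsl : Real.sin θ < θ := Real.sin_lt hθ.1
    have hc1 : Real.cos θ ≤ 1 := Real.cos_le_one θ
    apply div_neg_of_neg_of_pos
    · nlinarith
    · positivity
  apply strictAntiOn_of_deriv_neg (convex_Ioo _ _) ?_ hderiv
  apply ContinuousOn.div
  · exact (continuous_id.mul Real.continuous_cos).continuousOn
  · exact Real.continuous_sin.continuousOn
  · intro θ hθ
    exact (Real.sin_pos_of_pos_of_lt_pi hθ.1 (by linarith [hθ.2, pi_pos])).ne'

lemma theta_cont : Continuous (fun p : ℝ => Real.arccos (Real.sqrt (1 - p))) :=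
  Real.continuous_arccos.comp (Real.continuous_sqrt.comp (continuous_const.sub continuous_id))

lemma hFun_tendsto_zero :
    Filter.Tendsto hFun (nhdsWithin 0 (Set.Ioo 0 (π/2))) (nhds 1) := by
  have hsin : Filter.Tendsto (fun θ : ℝ => Real.sin θ / θ)
      (nhdsWithin 0 (Set.Ioo 0 (π/2))) (nhds 1) := by
    have h := (Real.hasDerivAt_sin 0)
    rw [hasDerivAt_iff_tendsto_slope] at h
    have h2 : Filter.Tendsto (slope Real.sin 0) (nhdsWithin 0 (Set.Ioo 0 (π/2))) (nhds (Real.cos 0)) :=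
      h.mono_left (nhdsWithin_mono 0 (fun x hx => ne_of_gt hx.1))
    rw [Real.cos_zero] at h2
    exact h2.congr fun θ => by rw [slope_def_field]; simp
  have hcos : Filter.Tendsto Real.cos (nhdsWithin 0 (Set.Ioo 0 (π/2))) (nhds 1) := by
    simpa using (Real.continuous_cos.tendsto 0).mono_left nhdsWithin_le_nhds
  have hdiv : Filter.Tendsto (fun θ : ℝ => Real.cos θ / (Real.sin θ / θ))
      (nhdsWithin 0 (Set.Ioo 0 (π/2))) (nhds 1) := by
    simpa only [div_one, Pi.div_def] using hcos.div hsin one_ne_zero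
  apply hdiv.congr'
  filter_upwards [self_mem_nhdsWithin] with θ hθ
  rw [hFun]
  field_simp

/-- For `p ∈ (0,1)`: `0 < γ_p < 1`, `γ_p` is strictly increasing in `p`,
`γ_p → 0` as `p → 0⁺`, and `γ_p → 1` as `p → 1⁻`. -/
theorem gammaP_properties :
    (∀ p ∈ Set.Ioo (0 : ℝ) 1, 0 < gammaP p ∧ gammaP p < 1) ∧
    StrictMonoOn gammaP (Set.Ioo (0 : ℝ) 1) ∧
    Filter.Tendsto gammaP (nhdsWithin 0 (Set.Ioo (0 : ℝ) 1)) (nhds 0) ∧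
    Filter.Tendsto gammaP (nhdsWithin 1 (Set.Ioo (0 : ℝ) 1)) (nhds 1) := by
  have hrepr : ∀ p ∈ Set.Ioo (0:ℝ) 1, gammaP p = 1 - hFun (Real.arccos (Real.sqrt (1 - p))) :=
    fun p hp => by unfold gammaP; exact gammaP_eq hp
  refine ⟨?_, ?_, ?_, ?_⟩
  · intro p hp
    rw [hrepr p hp]
    have := hFun_bounds (theta_mem hp)
    constructor <;> linarith [this.1, this.2]
  · intro p hp q hq hpq
    rw [hrepr p hp, hrepr q hq]
    have hθ : Real.arccos (Real.sqrt (1 - p)) < Real.arccos (Real.sqrt (1 - q)) := by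
      apply Real.strictAntiOn_arccos
      · exact ⟨le_trans (by norm_num) (Real.sqrt_nonneg _), Real.sqrt_le_one.2 (by linarith [hq.1])⟩
      · exact ⟨le_trans (by norm_num) (Real.sqrt_nonneg _), Real.sqrt_le_one.2 (by linarith [hp.1])⟩
      · exact Real.sqrt_lt_sqrt (by linarith [hq.2]) (by linarith)
    have := hFun_strictAnti (theta_mem hp) (theta_mem hq) hθ
    linarith
  · have hθt : Filter.Tendsto (fun p : ℝ => Real.arccos (Real.sqrt (1 - p)))
        (nhdsWithin 0 (Set.Ioo (0:ℝ) 1)) (nhdsWithin 0 (Set.Ioo 0 (π/2))) := by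
      rw [tendsto_nhdsWithin_iff]
      constructor
      · have := (theta_cont.tendsto 0).mono_left
          (nhdsWithin_le_nhds (s := Set.Ioo (0:ℝ) 1))
        simpa using this
      · filter_upwards [self_mem_nhdsWithin] with p hp using theta_mem hp
    have h := (hFun_tendsto_zero.comp hθt).const_sub 1
    rw [show (1:ℝ) - 1 = 0 by norm_num] at h
    apply h.congr'
    filter_upwards [self_mem_nhdsWithin] with p hp
    rw [hrepr p hp]; rfl
  · have hθt : Filter.Tendsto (fun p : ℝ => Real.arccos (Real.sqrt (1 - p)))
        (nhdsWithin 1 (Set.Ioo (0:ℝ) 1)) (nhds (π/2)) := by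
      have := (theta_cont.tendsto 1).mono_left
        (nhdsWithin_le_nhds (s := Set.Ioo (0:ℝ) 1))
      simpa [Real.arccos_zero] using this
    have hcont : Filter.Tendsto hFun (nhds (π/2)) (nhds 0) := by
      have : ContinuousAt hFun (π/2) := by
        apply ContinuousAt.div
        · exact continuousAt_id.mul Real.continuous_cos.continuousAt
        · exact Real.continuous_sin.continuousAt
        · simp
      have h0 : hFun (π/2) = 0 := by simp [hFun]
      simpa [h0] using this.tendsto
    have h := (hcont.comp hθt).const_sub 1
    rw [show (1:ℝ) - 0 = 1 by norm_num] at h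
    apply h.congr'
    filter_upwards [self_mem_nhdsWithin] with p hp
    rw [hrepr p hp]; rfl
end

section
/- ∫_{1−p}^{1} [ (1/p) − √((1−p)·x_p(y)·y)/(p·y) ] dy = 1 − √((1−p)/p)·arccos(√(1−p)), where x_p(y) = (√(p(1−y)) + √(y(1−p)))² and p ∈ (0,1). -/
open Real MeasureTheory intervalIntegral

/-- Antiderivative of `√((1-y)y)/y`. -/
noncomputable def singularF (y : ℝ) : ℝ := Real.sqrt (y * (1 - y)) + Real.arcsin (Real.sqrt y)

lemma singularF_hasDerivAt {y : ℝ} (hy0 : 0 < y) (hy1 : y < 1) :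
    HasDerivAt singularF (Real.sqrt ((1 - y) * y) / y) y := by
  have hs : 0 < Real.sqrt y := Real.sqrt_pos.mpr hy0
  have ht : 0 < Real.sqrt (1 - y) := Real.sqrt_pos.mpr (by linarith)
  have hu : y * (1 - y) ≠ 0 := by
    have : (0:ℝ) < 1 - y := by linarith
    positivity
  have h1 : HasDerivAt (fun y : ℝ => y * (1 - y)) (1 * (1 - y) + y * (0 - 1)) y :=
    (hasDerivAt_id y).mul ((hasDerivAt_const y 1).sub (hasDerivAt_id y))
  have h2 : HasDerivAt (fun y : ℝ => Real.sqrt (y * (1 - y)))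
      (1 / (2 * Real.sqrt (y * (1 - y))) * (1 * (1 - y) + y * (0 - 1))) y :=
    (Real.hasDerivAt_sqrt hu).comp y h1
  have hsy1 : Real.sqrt y ≠ -1 := by linarith
  have hsy2 : Real.sqrt y ≠ 1 := by
    intro h
    have := Real.sqrt_eq_one.mp h
    linarith
  have h3 : HasDerivAt (fun y : ℝ => Real.arcsin (Real.sqrt y))
      (1 / Real.sqrt (1 - Real.sqrt y ^ 2) * (1 / (2 * Real.sqrt y))) y :=
    (Real.hasDerivAt_arcsin hsy1 hsy2).comp y (Real.hasDerivAt_sqrt (ne_of_gt hy0))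
  have h4 := h2.add h3
  have heq : 1 / (2 * Real.sqrt (y * (1 - y))) * (1 * (1 - y) + y * (0 - 1)) +
      1 / Real.sqrt (1 - Real.sqrt y ^ 2) * (1 / (2 * Real.sqrt y)) =
      Real.sqrt ((1 - y) * y) / y := by
    rw [Real.sq_sqrt (le_of_lt hy0), Real.sqrt_mul (le_of_lt hy0),
      Real.sqrt_mul (by linarith : (0:ℝ) ≤ 1 - y)]
    have hy : Real.sqrt y * Real.sqrt y = y := Real.mul_self_sqrt hy0.le
    have h1y : Real.sqrt (1 - y) * Real.sqrt (1 - y) = 1 - y :=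
      Real.mul_self_sqrt (by linarith)
    field_simp
    linear_combination (-2*Real.sqrt (1-y)*Real.sqrt (1-y))*hy +
      (-2*y)*h1y
  rw [heq] at h4
  exact h4

/-- The total singular mass of the Grothendieck permuton:
`∫_{1−p}^{1} [1/p − √((1−p)·x_p(y)·y)/(p·y)] dy = 1 − √((1−p)/p)·arccos(√(1−p))`,
where `x_p(y) = (√(p(1−y)) + √(y(1−p)))²` and `p ∈ (0,1)`. -/
theorem singular_mass_integral (p : ℝ) (hp : p ∈ Set.Ioo (0 : ℝ) 1) :
    (∫ y in (1 - p)..1,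
        (1 / p - Real.sqrt ((1 - p) *
          ((Real.sqrt (p * (1 - y)) + Real.sqrt (y * (1 - p))) ^ 2) * y) / (p * y))) =
      1 - Real.sqrt ((1 - p) / p) * Real.arccos (Real.sqrt (1 - p)) := by
  obtain ⟨hp0, hp1⟩ := hp
  have ha0 : 0 < 1 - p := by linarith
  have hle : (1 : ℝ) - p ≤ 1 := by linarith
  set C : ℝ := Real.sqrt ((1 - p) * p) / p with hC
  -- pointwise rewrite of the integrand
  have key : Set.EqOn
      (fun y => 1 / p - Real.sqrt ((1 - p) *
          ((Real.sqrt (p * (1 - y)) + Real.sqrt (y * (1 - p))) ^ 2) * y) / (p * y))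
      (fun y => 1 - C * (Real.sqrt ((1 - y) * y) / y)) (Set.uIcc (1 - p) 1) := by
    intro y hy
    rw [Set.uIcc_of_le hle] at hy
    obtain ⟨hy0', hy1⟩ := hy
    have hy0 : 0 < y := lt_of_lt_of_le ha0 hy0'
    have h1y : (0:ℝ) ≤ 1 - y := by linarith
    have hsnn : 0 ≤ Real.sqrt (p * (1 - y)) + Real.sqrt (y * (1 - p)) :=
      add_nonneg (Real.sqrt_nonneg _) (Real.sqrt_nonneg _)
    have e1 : (1 - p) * ((Real.sqrt (p * (1 - y)) + Real.sqrt (y * (1 - p))) ^ 2) * y =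
        (Real.sqrt ((1 - p) * y) * (Real.sqrt (p * (1 - y)) + Real.sqrt (y * (1 - p)))) ^ 2 := by
      rw [mul_pow, Real.sq_sqrt (by positivity : (0:ℝ) ≤ (1 - p) * y)]
      ring
    have e2 : Real.sqrt ((1 - p) *
          ((Real.sqrt (p * (1 - y)) + Real.sqrt (y * (1 - p))) ^ 2) * y) =
        Real.sqrt ((1 - p) * y) * (Real.sqrt (p * (1 - y)) + Real.sqrt (y * (1 - p))) := by
      rw [e1, Real.sqrt_sq (by positivity)]
    have e3 : Real.sqrt ((1 - p) * y) * Real.sqrt (y * (1 - p)) = (1 - p) * y := by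
      rw [← Real.sqrt_mul (by positivity : (0:ℝ) ≤ (1 - p) * y)]
      rw [show (1 - p) * y * (y * (1 - p)) = ((1 - p) * y) ^ 2 by ring]
      exact Real.sqrt_sq (by positivity)
    have e4 : Real.sqrt ((1 - p) * y) * Real.sqrt (p * (1 - y)) =
        Real.sqrt ((1 - p) * p) * Real.sqrt ((1 - y) * y) := by
      rw [← Real.sqrt_mul (by positivity : (0:ℝ) ≤ (1 - p) * y),
        ← Real.sqrt_mul (by positivity : (0:ℝ) ≤ (1 - p) * p)]
      ring_nf
    simp only
    rw [e2, mul_add, e3, e4, hC]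
    field_simp
    ring
  rw [intervalIntegral.integral_congr key]
  -- integrability of the correction term
  have hcont : ContinuousOn (fun y => Real.sqrt ((1 - y) * y) / y) (Set.uIcc (1 - p) 1) := by
    apply ContinuousOn.div
    · exact (Real.continuous_sqrt.comp (by continuity)).continuousOn
    · exact continuousOn_id
    · intro y hy
      rw [Set.uIcc_of_le hle] at hy
      exact ne_of_gt (lt_of_lt_of_le ha0 hy.1)
  have hint : IntervalIntegrable (fun y => Real.sqrt ((1 - y) * y) / y) volume (1 - p) 1 :=
    hcont.intervalIntegrable
  have hsplit : (∫ y in (1 - p)..1, (1 - C * (Real.sqrt ((1 - y) * y) / y))) =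
      (∫ _ in (1 - p)..1, (1:ℝ)) - C * ∫ y in (1 - p)..1, Real.sqrt ((1 - y) * y) / y := by
    rw [intervalIntegral.integral_sub intervalIntegrable_const (hint.const_mul C),
      intervalIntegral.integral_const_mul]
  rw [hsplit, intervalIntegral.integral_const, smul_eq_mul, mul_one]
  -- compute the integral of √((1-y)y)/y via FTC
  have hFTC : (∫ y in (1 - p)..1, Real.sqrt ((1 - y) * y) / y) =
      singularF 1 - singularF (1 - p) := by
    apply intervalIntegral.integral_eq_sub_of_hasDerivAt_of_le hle
    · apply Continuous.continuousOn
      unfold singularF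
      exact (Real.continuous_sqrt.comp (by continuity)).add
        (Real.continuous_arcsin.comp Real.continuous_sqrt)
    · intro y hy
      exact singularF_hasDerivAt (lt_of_lt_of_le ha0 hy.1.le) hy.2
    · exact hint
  rw [hFTC]
  have hF1 : singularF 1 = π / 2 := by
    unfold singularF
    simp [Real.arcsin_one]
  have hF2 : singularF (1 - p) = Real.sqrt ((1 - p) * p) + Real.arcsin (Real.sqrt (1 - p)) := by
    unfold singularF
    ring_nf
  rw [hF1, hF2, Real.arccos]
  have hq : Real.sqrt ((1 - p) / p) = Real.sqrt ((1 - p) * p) / p := by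
    rw [show (1 - p) / p = (1 - p) * p / p ^ 2 by field_simp,
      Real.sqrt_div (by positivity), Real.sqrt_sq hp0.le]
  rw [hq, hC]
  have hq2 : Real.sqrt ((1 - p) * p) ^ 2 = (1 - p) * p :=
    Real.sq_sqrt (by positivity)
  have hpne : p ≠ 0 := ne_of_gt hp0
  have hsp : Real.sqrt p * Real.sqrt p = p := Real.mul_self_sqrt hp0.le
  have hs1p : Real.sqrt (1-p) * Real.sqrt (1-p) = 1 - p :=
    Real.mul_self_sqrt (by linarith)
  field_simp
  linear_combination 2 * (Real.sq_sqrt (by positivity : (0:ℝ) ≤ p * (1 - p)))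
end
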